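/- Assume b_1 >= b_2 >= ... >= b_n >= b_{n+1} = 0. Define C = { x in {0,1}^n : sum_j d_j x_j + max_{R subset N, |R| <= Gamma} sum_{j in R} b_j x_j <= s } and, for each l in {Gamma, Gamma+1, ..., n-1, n+1}, define C_l = { x in {0,1}^n : sum_j d_j x_j + sum_{j <= min(l,n)} (b_j - b_l) x_j <= s - Gamma * b_l }. Then C equals the union of the C_l over l in {Gamma, Gamma+1, ..., n-1, n+1}. -/
import Mathlib
open Finset

/-- Worst-case (cardinality-constrained) extra term. -/
noncomputable def robustMax {ι : Type*} [DecidableEq ι] (N : Finset ι) (Γ : ℕ) (f : ι → ℝ) : ℝ :=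
  (N.powerset.filter fun R => R.card ≤ Γ).sup' ⟨∅, by simp⟩ fun R => ∑ j ∈ R, f j

lemma le_robustMax {ι : Type*} [DecidableEq ι] (N : Finset ι) (Γ : ℕ) (f : ι → ℝ)
    (R : Finset ι) (hR : R ⊆ N) (hc : R.card ≤ Γ) :
    ∑ j ∈ R, f j ≤ robustMax N Γ f := by
  unfold robustMax
  exact Finset.le_sup' (fun R => ∑ j ∈ R, f j)
    (by simp only [Finset.mem_filter, Finset.mem_powerset]; exact ⟨hR, hc⟩)

lemma exists_good_l (n Γ : ℕ) (b x : ℕ → ℝ)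
    (hsort : ∀ j k, 1 ≤ j → j ≤ k → k ≤ n + 1 → b k ≤ b j)
    (hbn : b (n + 1) = 0)
    (hbin : ∀ j ∈ Finset.Icc 1 n, x j = 0 ∨ x j = 1)
    (hΓ : Γ ≤ n) :
    ∃ l ∈ (insert (n + 1) (Finset.Ico Γ n) : Finset ℕ),
      (Γ : ℝ) * b l + ∑ j ∈ Finset.Icc 1 (min l n), (b j - b l) * x j
        ≤ robustMax (Finset.Icc 1 n) Γ (fun j => b j * x j) := by
  classical
  set T := (Finset.Icc 1 n).filter (fun j => x j = 1) with hT
  have hsum_b : ∀ m, m ≤ n → ∑ j ∈ Finset.Icc 1 m, b j * x j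
      = ∑ j ∈ (Finset.Icc 1 m).filter (fun j => x j = 1), b j * x j := by
    intro m hmn
    rw [Finset.sum_filter_of_ne]
    intro j hj hne
    have hjn : j ∈ Finset.Icc 1 n := by
      have := Finset.mem_Icc.mp hj; exact Finset.mem_Icc.mpr ⟨this.1, le_trans this.2 hmn⟩
    rcases hbin j hjn with h | h
    · exact absurd (by rw [h, mul_zero]) hne
    · exact h
  have hsum_x : ∀ m, m ≤ n → ∑ j ∈ Finset.Icc 1 m, x j
      = (((Finset.Icc 1 m).filter (fun j => x j = 1)).card : ℝ) := by
    intro m hmn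
    rw [Finset.card_filter]
    push_cast
    apply Finset.sum_congr rfl
    intro j hj
    have hjn : j ∈ Finset.Icc 1 n := by
      have := Finset.mem_Icc.mp hj; exact Finset.mem_Icc.mpr ⟨this.1, le_trans this.2 hmn⟩
    rcases hbin j hjn with h | h <;> rw [h] <;> norm_num
  by_cases hk : T.card ≤ Γ
  · -- l = n + 1
    refine ⟨n + 1, Finset.mem_insert_self _ _, ?_⟩
    rw [hbn, min_eq_right (Nat.le_succ n)]
    simp only [mul_zero, zero_add, sub_zero]
    rw [hsum_b n le_rfl]
    exact le_robustMax _ _ _ T (Finset.filter_subset _ _) hk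
  · push_neg at hk
    have hTne : T.Nonempty := Finset.card_pos.mp (by omega)
    have hn1 : 1 ≤ n := by
      obtain ⟨j, hj⟩ := hTne
      have := Finset.mem_Icc.mp (Finset.mem_of_mem_filter j hj)
      omega
    by_cases hΓ0 : Γ = 0
    · -- l = 0
      subst hΓ0
      refine ⟨0, Finset.mem_insert_of_mem (Finset.mem_Ico.mpr ⟨by omega, by omega⟩), ?_⟩
      simp only [Nat.cast_zero, zero_mul, zero_add, Nat.zero_min]
      rw [show Finset.Icc 1 0 = ∅ from rfl, Finset.sum_empty]
      have := le_robustMax (Finset.Icc 1 n) 0 (fun j => b j * x j) ∅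
        (Finset.empty_subset _) (by simp)
      simpa using this
    · -- main case: Γ ≥ 1, T.card > Γ
      have hΓ1 : 1 ≤ Γ := by omega
      set k := T.card with hkdef
      have hΓk : Γ < k := hk
      set f := T.orderEmbOfFin (rfl : T.card = k) with hf
      set L : ℕ := f ⟨Γ, hΓk⟩ with hL
      have hLT : L ∈ T := Finset.orderEmbOfFin_mem T rfl _
      have hLIcc := Finset.mem_Icc.mp (Finset.mem_of_mem_filter L hLT)
      have hxL : x L = 1 := (Finset.mem_filter.mp hLT).2
      have hfilt : T.filter (fun j => j ≤ L) = Finset.image f (Finset.Iic ⟨Γ, hΓk⟩) := by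
        ext t
        simp only [Finset.mem_filter, Finset.mem_image, Finset.mem_Iic]
        constructor
        · rintro ⟨htT, htL⟩
          have : t ∈ Set.range f := by rw [Finset.range_orderEmbOfFin]; exact htT
          obtain ⟨i, hi⟩ := this
          exact ⟨i, by rw [← f.le_iff_le, hi]; exact htL, hi⟩
        · rintro ⟨i, hiΓ, hit⟩
          constructor
          · rw [← hit]; exact Finset.orderEmbOfFin_mem T rfl _
          · rw [← hit]; exact f.monotone hiΓ
      have hcardF : (T.filter (fun j => j ≤ L)).card = Γ + 1 := by
        rw [hfilt, Finset.card_image_of_injective _ f.injective, Fin.card_Iic]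
      have hLge : Γ + 1 ≤ L := by
        have hsub : T.filter (fun j => j ≤ L) ⊆ Finset.Icc 1 L := by
          intro j hj
          rw [Finset.mem_filter] at hj
          have := Finset.mem_Icc.mp (Finset.mem_of_mem_filter j hj.1)
          exact Finset.mem_Icc.mpr ⟨this.1, hj.2⟩
        have := Finset.card_le_card hsub
        rw [hcardF, Nat.card_Icc] at this
        omega
      have hfilt2 : ∀ m, m ≤ n → (Finset.Icc 1 m).filter (fun j => x j = 1)
          = T.filter (fun j => j ≤ m) := by
        intro m hmn
        ext j
        simp only [hT, Finset.mem_filter, Finset.mem_Icc]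
        constructor
        · rintro ⟨⟨h1, h2⟩, h3⟩; exact ⟨⟨⟨h1, le_trans h2 hmn⟩, h3⟩, h2⟩
        · rintro ⟨⟨⟨h1, h2⟩, h3⟩, h4⟩; exact ⟨⟨h1, h4⟩, h3⟩
      have hSx : ∑ j ∈ Finset.Icc 1 L, x j = (Γ : ℝ) + 1 := by
        rw [hsum_x L hLIcc.2, hfilt2 L hLIcc.2, hcardF]; push_cast; ring
      have hSb : ∑ j ∈ Finset.Icc 1 L, b j * x j
          = ∑ j ∈ T.filter (fun j => j ≤ L), b j * x j := by
        rw [hsum_b L hLIcc.2, hfilt2 L hLIcc.2]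
      set Rs := (T.filter (fun j => j ≤ L)).erase L with hRs
      have hLF : L ∈ T.filter (fun j => j ≤ L) := Finset.mem_filter.mpr ⟨hLT, le_rfl⟩
      have hRscard : Rs.card = Γ := by
        rw [hRs, Finset.card_erase_of_mem hLF, hcardF]
        omega
      have hRssub : Rs ⊆ Finset.Icc 1 n := by
        intro j hj
        exact Finset.mem_of_mem_filter j
          (Finset.mem_of_mem_filter j (Finset.mem_of_mem_erase hj))
      have hsum_erase : ∑ j ∈ Rs, b j * x j + b L * x L
          = ∑ j ∈ T.filter (fun j => j ≤ L), b j * x j :=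
        Finset.sum_erase_add _ _ hLF
      have hgL : (Γ : ℝ) * b L + ∑ j ∈ Finset.Icc 1 L, (b j - b L) * x j
          ≤ robustMax (Finset.Icc 1 n) Γ (fun j => b j * x j) := by
        have hexp : ∑ j ∈ Finset.Icc 1 L, (b j - b L) * x j
            = ∑ j ∈ Finset.Icc 1 L, b j * x j - b L * ∑ j ∈ Finset.Icc 1 L, x j := by
          rw [Finset.mul_sum, ← Finset.sum_sub_distrib]
          exact Finset.sum_congr rfl fun j _ => by ring
        have heq : (Γ : ℝ) * b L + ∑ j ∈ Finset.Icc 1 L, (b j - b L) * x j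
            = ∑ j ∈ Rs, b j * x j := by
          rw [hexp, hSx, hSb, ← hsum_erase, hxL]; ring
        rw [heq]
        exact le_robustMax _ _ _ Rs hRssub (le_of_eq hRscard)
      by_cases hLn : L < n
      · refine ⟨L, Finset.mem_insert_of_mem (Finset.mem_Ico.mpr ⟨by omega, hLn⟩), ?_⟩
        rw [min_eq_left (le_of_lt hLn)]
        exact hgL
      · -- L = n : use l = n - 1
        have hLn' : L = n := by omega
        rw [hLn'] at hgL hSx
        refine ⟨n - 1, Finset.mem_insert_of_mem (Finset.mem_Ico.mpr ⟨by omega, by omega⟩), ?_⟩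
        rw [min_eq_left (by omega : n - 1 ≤ n)]
        -- split the sum over Icc 1 n at n
        have hicc : (Finset.Icc 1 n).erase n = Finset.Icc 1 (n - 1) := by
          ext j; simp only [Finset.mem_erase, Finset.mem_Icc]; omega
        have hsplitn : ∀ g : ℕ → ℝ,
            ∑ j ∈ Finset.Icc 1 (n - 1), g j + g n = ∑ j ∈ Finset.Icc 1 n, g j := by
          intro g
          rw [← hicc]
          exact Finset.sum_erase_add _ _ (Finset.mem_Icc.mpr ⟨hn1, le_rfl⟩)
        set S := ∑ j ∈ Finset.Icc 1 (n - 1), x j with hSdef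
        set B := ∑ j ∈ Finset.Icc 1 (n - 1), b j * x j with hBdef
        have hxn : x n ≤ 1 := by
          rcases hbin n (Finset.mem_Icc.mpr ⟨hn1, le_rfl⟩) with h | h <;> rw [h] <;> norm_num
        have hSval : S + x n = (Γ : ℝ) + 1 := by
          rw [hSdef, hsplitn x]; exact hSx
        have hSge : (Γ : ℝ) ≤ S := by linarith
        have hbn1 : b n ≤ b (n - 1) := hsort (n - 1) n (by omega) (by omega) (by omega)
        have hexp2 : ∀ c : ℝ, ∑ j ∈ Finset.Icc 1 (n - 1), (b j - c) * x j = B - c * S := by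
          intro c
          rw [hBdef, hSdef, Finset.mul_sum, ← Finset.sum_sub_distrib]
          exact Finset.sum_congr rfl fun j _ => by ring
        have hgn : (Γ : ℝ) * b n + (B - b n * S)
            ≤ robustMax (Finset.Icc 1 n) Γ (fun j => b j * x j) := by
          have h1 : ∑ j ∈ Finset.Icc 1 n, (b j - b n) * x j = B - b n * S := by
            rw [← hsplitn (fun j => (b j - b n) * x j)]
            simp only [sub_self, zero_mul, add_zero]
            exact hexp2 (b n)
          rw [h1] at hgL
          exact hgL
        rw [hexp2 (b (n - 1))]
        nlinarith [mul_nonneg (sub_nonneg.mpr hbn1) (sub_nonneg.mpr hSge)]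

lemma robustMax_le {ι : Type*} [DecidableEq ι] (N : Finset ι) (Γ : ℕ) (f : ι → ℝ)
    (a : ℝ) (h : ∀ R ⊆ N, R.card ≤ Γ → ∑ j ∈ R, f j ≤ a) : robustMax N Γ f ≤ a := by
  apply Finset.sup'_le
  intro R hR
  simp only [Finset.mem_filter, Finset.mem_powerset] at hR
  exact h R hR.1 hR.2


lemma sum_le_bound (n Γ l : ℕ) (b x : ℕ → ℝ)
    (hsort : ∀ j k, 1 ≤ j → j ≤ k → k ≤ n + 1 → b k ≤ b j)
    (hbn : b (n + 1) = 0)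
    (hbin : ∀ j ∈ Finset.Icc 1 n, x j = 0 ∨ x j = 1)
    (hΓl : Γ ≤ l) (hl : l ≤ n + 1)
    (R : Finset ℕ) (hR : R ⊆ Finset.Icc 1 n) (hcard : R.card ≤ Γ) :
    ∑ j ∈ R, b j * x j ≤ (Γ : ℝ) * b l + ∑ j ∈ Finset.Icc 1 (min l n), (b j - b l) * x j := by
  classical
  rcases Nat.eq_zero_or_pos l with hl0 | hl1
  · subst hl0
    have hΓ0 : Γ = 0 := Nat.le_zero.mp hΓl
    have hRe : R = ∅ := Finset.card_eq_zero.mp (Nat.le_zero.mp (hΓ0 ▸ hcard))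
    subst hRe
    simp [hΓ0]
  · have hbl : (0 : ℝ) ≤ b l := by
      have h := hsort l (n + 1) hl1 hl le_rfl
      rw [hbn] at h; exact h
    set m := min l n with hm
    set F := R.filter (fun j => j ≤ m) with hF
    set G := R.filter (fun j => ¬ j ≤ m) with hG
    have hsplit : ∑ j ∈ F, b j * x j + ∑ j ∈ G, b j * x j = ∑ j ∈ R, b j * x j :=
      Finset.sum_filter_add_sum_filter_not R _ _
    have h1 : ∑ j ∈ F, b j * x j ≤ ∑ j ∈ F, (b j - b l) * x j + F.card * b l := by
      calc ∑ j ∈ F, b j * x j ≤ ∑ j ∈ F, ((b j - b l) * x j + b l) := by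
            apply Finset.sum_le_sum
            intro j hj
            have hjR : j ∈ R := Finset.mem_of_mem_filter j hj
            rcases hbin j (hR hjR) with h | h <;> rw [h] <;> nlinarith [hbl]
        _ = ∑ j ∈ F, (b j - b l) * x j + F.card * b l := by
            rw [Finset.sum_add_distrib, Finset.sum_const, nsmul_eq_mul]
    have h2 : ∑ j ∈ F, (b j - b l) * x j ≤ ∑ j ∈ Finset.Icc 1 m, (b j - b l) * x j := by
      apply Finset.sum_le_sum_of_subset_of_nonneg
      · intro j hj
        rw [hF, Finset.mem_filter] at hj
        have := Finset.mem_Icc.mp (hR hj.1)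
        exact Finset.mem_Icc.mpr ⟨this.1, hj.2⟩
      · intro j hj _
        have hj' := Finset.mem_Icc.mp hj
        have hjn : j ∈ Finset.Icc 1 n := Finset.mem_Icc.mpr ⟨hj'.1, le_trans hj'.2 (min_le_right l n)⟩
        have hxj : (0:ℝ) ≤ x j := by rcases hbin j hjn with h | h <;> rw [h] <;> norm_num
        have hbj : b l ≤ b j := hsort j l hj'.1 (le_trans hj'.2 (min_le_left l n)) hl
        nlinarith
    have h3 : ∑ j ∈ G, b j * x j ≤ G.card * b l := by
      calc ∑ j ∈ G, b j * x j ≤ ∑ _j ∈ G, b l := by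
            apply Finset.sum_le_sum
            intro j hj
            rw [hG, Finset.mem_filter] at hj
            have hj' := Finset.mem_Icc.mp (hR hj.1)
            have hlj : l ≤ j := by omega
            have hbj : b j ≤ b l := hsort l j hl1 hlj (by omega)
            rcases hbin j (hR hj.1) with h | h <;> rw [h] <;> nlinarith
        _ = G.card * b l := by rw [Finset.sum_const, nsmul_eq_mul]
    have hcards : F.card + G.card = R.card := Finset.card_filter_add_card_filter_not _
    have hfc : (F.card : ℝ) * b l + (G.card : ℝ) * b l ≤ (Γ : ℝ) * b l := by
      have : (F.card : ℝ) + G.card ≤ (Γ : ℝ) := by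
        have : F.card + G.card ≤ Γ := hcards ▸ hcard
        exact_mod_cast this
      nlinarith
    linarith

/-- Decomposition of the robust binary knapsack feasible set `C` into the
nominal knapsack feasible sets `C_l`, `l ∈ {Γ, Γ+1, …, n-1, n+1}` (Lee et al.). -/
theorem stmt3 (n Γ : ℕ) (d b : ℕ → ℝ) (s : ℝ)
    (hsort : ∀ j k, 1 ≤ j → j ≤ k → k ≤ n + 1 → b k ≤ b j)
    (hbn : b (n + 1) = 0)
    (hd : ∀ j ∈ Finset.Icc 1 n, 0 ≤ d j)
    (hΓ : Γ ≤ n) (hs : 0 ≤ s) :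
    {x : ℕ → ℝ | (∀ j ∈ Finset.Icc 1 n, x j = 0 ∨ x j = 1) ∧
        ∑ j ∈ Finset.Icc 1 n, d j * x j
          + robustMax (Finset.Icc 1 n) Γ (fun j => b j * x j) ≤ s} =
      ⋃ l ∈ (insert (n + 1) (Finset.Ico Γ n) : Finset ℕ),
        {x : ℕ → ℝ | (∀ j ∈ Finset.Icc 1 n, x j = 0 ∨ x j = 1) ∧
          ∑ j ∈ Finset.Icc 1 n, d j * x j
            + ∑ j ∈ Finset.Icc 1 (min l n), (b j - b l) * x j ≤ s - (Γ : ℝ) * b l} := by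
  ext x
  simp only [Set.mem_setOf_eq, Set.mem_iUnion, exists_prop]
  constructor
  · rintro ⟨hbin, hx⟩
    obtain ⟨l, hl, hg⟩ := exists_good_l n Γ b x hsort hbn hbin hΓ
    exact ⟨l, hl, hbin, by linarith⟩
  · rintro ⟨l, hl, hbin, hx⟩
    refine ⟨hbin, ?_⟩
    have hlmem : l = n + 1 ∨ (Γ ≤ l ∧ l < n) := by
      rcases Finset.mem_insert.mp hl with h | h
      · exact Or.inl h
      · exact Or.inr (Finset.mem_Ico.mp h)
    have hΓl : Γ ≤ l := by omega
    have hln : l ≤ n + 1 := by omega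
    have hrm : robustMax (Finset.Icc 1 n) Γ (fun j => b j * x j)
        ≤ (Γ : ℝ) * b l + ∑ j ∈ Finset.Icc 1 (min l n), (b j - b l) * x j := by
      apply robustMax_le
      intro R hR hc
      exact sum_le_bound n Γ l b x hsort hbn hbin hΓl hln R hR hc
    linarith
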